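/- arXiv:2605.10526 — 2 statements merged into one kernel-verified Lean document; each statement's English description precedes it below -/
import Mathlib

section
/- Let G = (V, E) be a simple graph on a finite vertex set V with nonnegative edge weights w_e ≥ 0, and let π be a distribution over subsets of V with marginals q_u and pairwise marginals q_{uv} (so that w_e^u + w_e^v − w_e^{uv} ≥ 0 for every edge e = uv). Then for every x : V → ℝ and every pair of vertices i, j ∈ V, the one-variable function g_x(t) = F^π(x + t·(e_i − e_j)) is convex on ℝ, where e_i denotes the i-th standard basis vector of ℝ^V. -/
open Finset

/-- The marginal probability that `u` is interdicted under distribution `π`. -/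
def marg {V : Type*} [Fintype V] [DecidableEq V] (π : Finset V → ℝ) (u : V) : ℝ :=
  ∑ S ∈ univ.filter (fun S : Finset V => u ∈ S), π S

/-- The pairwise marginal probability that both `u` and `v` are interdicted under `π`. -/
def marg2 {V : Type*} [Fintype V] [DecidableEq V] (π : Finset V → ℝ) (u v : V) : ℝ :=
  ∑ S ∈ univ.filter (fun S : Finset V => u ∈ S ∧ v ∈ S), π S

/-- The auxiliary multilinear function `F^π(x)`. -/
def Ffun {V : Type*} [Fintype V] [DecidableEq V] (E : Finset (V × V)) (w : V × V → ℝ)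
    (π : Finset V → ℝ) (x : V → ℝ) : ℝ :=
  ∑ e ∈ E,
    (x e.1 * (w e * (1 - marg π e.1)) + x e.2 * (w e * (1 - marg π e.2))
      + x e.1 * x e.2 *
        (w e * (1 - marg2 π e.1 e.2) - w e * (1 - marg π e.1) - w e * (1 - marg π e.2)))

private lemma quad_convex (p q r : ℝ) (hp : 0 ≤ p) :
    ConvexOn ℝ Set.univ (fun t : ℝ => p * t ^ 2 + q * t + r) := by
  refine ⟨convex_univ, fun u _ v _ a b ha hb hab => ?_⟩
  simp only [smul_eq_mul]
  have hb' : b = 1 - a := by linarith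
  subst hb'
  nlinarith [mul_nonneg hp (mul_nonneg (mul_nonneg ha hb) (sq_nonneg (u - v)))]

private lemma marg_incl_excl {V : Type*} [Fintype V] [DecidableEq V]
    (π : Finset V → ℝ) (hpos : ∀ S : Finset V, 0 ≤ π S)
    (hsum : ∑ S : Finset V, π S = 1) (u v : V) :
    marg π u + marg π v - marg2 π u v ≤ 1 := by
  rw [← hsum, marg, marg, marg2, Finset.sum_filter, Finset.sum_filter, Finset.sum_filter]
  rw [← Finset.sum_add_distrib, ← Finset.sum_sub_distrib]
  apply Finset.sum_le_sum
  intro S _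
  split_ifs <;> simp_all <;> linarith [hpos S]

/-- `F^π` is convex along every direction `e_i − e_j`: for every `x : V → ℝ` and
vertices `i, j`, the one-variable function `t ↦ F^π(x + t·(e_i − e_j))` is convex on `ℝ`. -/
theorem F_directionally_convex {V : Type*} [Fintype V] [DecidableEq V]
    (E : Finset (V × V)) (w : V × V → ℝ) (hw : ∀ e ∈ E, 0 ≤ w e)
    (hloop : ∀ e ∈ E, e.1 ≠ e.2) (hori : ∀ e ∈ E, (e.2, e.1) ∉ E)
    (π : Finset V → ℝ) (hpos : ∀ S : Finset V, 0 ≤ π S)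
    (hsum : ∑ S : Finset V, π S = 1)
    (x : V → ℝ) (i j : V) :
    ConvexOn ℝ Set.univ (fun t : ℝ =>
      Ffun E w π (fun v =>
        x v + t * ((if v = i then (1 : ℝ) else 0) - (if v = j then (1 : ℝ) else 0)))) := by
  set α : V → ℝ := fun v => (if v = i then (1 : ℝ) else 0) - (if v = j then (1 : ℝ) else 0)
    with hα
  set cw : V × V → ℝ := fun e =>
    w e * (1 - marg2 π e.1 e.2) - w e * (1 - marg π e.1) - w e * (1 - marg π e.2) with hcw
  have key : (fun t : ℝ => Ffun E w π (fun v => x v + t * α v)) =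
      fun t : ℝ => (∑ e ∈ E, cw e * (α e.1 * α e.2)) * t ^ 2
        + (∑ e ∈ E, (α e.1 * (w e * (1 - marg π e.1)) + α e.2 * (w e * (1 - marg π e.2))
            + cw e * (α e.1 * x e.2 + α e.2 * x e.1))) * t
        + (∑ e ∈ E, (x e.1 * (w e * (1 - marg π e.1)) + x e.2 * (w e * (1 - marg π e.2))
            + x e.1 * x e.2 * cw e)) := by
    funext t
    simp only [Ffun, Finset.sum_mul, ← Finset.sum_add_distrib]
    apply Finset.sum_congr rfl
    intro e _
    ring
  rw [key]
  apply quad_convex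
  apply Finset.sum_nonneg
  intro e he
  have hC : cw e ≤ 0 := by
    have h1 := marg_incl_excl π hpos hsum e.1 e.2
    have h2 := hw e he
    have hCe : cw e = w e * (1 - marg2 π e.1 e.2) - w e * (1 - marg π e.1)
        - w e * (1 - marg π e.2) := rfl
    rw [hCe]
    nlinarith
  have hA : α e.1 * α e.2 ≤ 0 := by
    have hne := hloop e he
    rw [hα]
    simp only
    split_ifs <;> norm_num <;> simp_all
  nlinarith [mul_nonneg (neg_nonneg.mpr hC) (neg_nonneg.mpr hA)]
end

section
/- Let G = (V, E) be a simple graph on a finite vertex set V with nonnegative edge weights w_e ≥ 0, let π be a distribution over subsets of V, and let q : V → ℝ be its marginal vector, q_v = ∑_{S : v ∈ S} π(S). Then for every x : V → ℝ with 0 ≤ x_v ≤ 1 for all v ∈ V, (1/2)·L̃^q(x) ≤ L^π(x) ≤ L̃^q(x). -/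
open Finset

/-- The LP objective `L^π(x)` of the follower's relaxed problem. -/
def Lfun {V : Type*} [Fintype V] [DecidableEq V] (E : Finset (V × V)) (w : V × V → ℝ)
    (π : Finset V → ℝ) (x : V → ℝ) : ℝ :=
  ∑ e ∈ E,
    (x e.1 * (w e * (1 - marg π e.1)) + x e.2 * (w e * (1 - marg π e.2))
      + max 0 (x e.1 + x e.2 - 1) *
        (w e * (1 - marg2 π e.1 e.2) - w e * (1 - marg π e.1) - w e * (1 - marg π e.2)))

/-- The linearized surrogate `L̃^q(x) = ∑_{e=uv} w_e·[x_u(1 − q_u) + x_v(1 − q_v)]`. -/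
def Ltilde {V : Type*} (E : Finset (V × V)) (w : V × V → ℝ)
    (q : V → ℝ) (x : V → ℝ) : ℝ :=
  ∑ e ∈ E, w e * (x e.1 * (1 - q e.1) + x e.2 * (1 - q e.2))


lemma marg2_nonneg {V : Type*} [Fintype V] [DecidableEq V] (π : Finset V → ℝ)
    (hpos : ∀ S, 0 ≤ π S) (u v : V) : 0 ≤ marg2 π u v :=
  Finset.sum_nonneg fun S _ => hpos S

lemma marg2_le_marg_left {V : Type*} [Fintype V] [DecidableEq V] (π : Finset V → ℝ)
    (hpos : ∀ S, 0 ≤ π S) (u v : V) : marg2 π u v ≤ marg π u :=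
  Finset.sum_le_sum_of_subset_of_nonneg
    (Finset.monotone_filter_right _ (fun S _ h => h.1)) (fun S _ _ => hpos S)

lemma marg2_le_marg_right {V : Type*} [Fintype V] [DecidableEq V] (π : Finset V → ℝ)
    (hpos : ∀ S, 0 ≤ π S) (u v : V) : marg2 π u v ≤ marg π v :=
  Finset.sum_le_sum_of_subset_of_nonneg
    (Finset.monotone_filter_right _ (fun S _ h => h.2)) (fun S _ _ => hpos S)

lemma marg_union_bound {V : Type*} [Fintype V] [DecidableEq V] (π : Finset V → ℝ)
    (hpos : ∀ S, 0 ≤ π S) (hsum : ∑ S : Finset V, π S = 1) (u v : V) :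
    marg π u + marg π v - marg2 π u v ≤ 1 := by
  have h := Finset.sum_union_inter (s₁ := Finset.univ.filter fun S : Finset V => u ∈ S)
    (s₂ := Finset.univ.filter fun S : Finset V => v ∈ S) (f := π)
  have hinter : (Finset.univ.filter fun S : Finset V => u ∈ S) ∩
      (Finset.univ.filter fun S : Finset V => v ∈ S)
      = Finset.univ.filter (fun S : Finset V => u ∈ S ∧ v ∈ S) :=
    (Finset.filter_and _ _ _).symm
  have hle : ∑ S ∈ (Finset.univ.filter fun S : Finset V => u ∈ S) ∪
      (Finset.univ.filter fun S : Finset V => v ∈ S), π S ≤ ∑ S : Finset V, π S :=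
    Finset.sum_le_sum_of_subset_of_nonneg (Finset.subset_univ _) (fun S _ _ => hpos S)
  rw [hinter] at h
  unfold marg marg2
  rw [hsum] at hle
  linarith

/-- `(1/2)·L̃^q(x) ≤ L^π(x) ≤ L̃^q(x)` for every `x ∈ [0,1]^V`, where `q` is the marginal
vector of the distribution `π`. -/
theorem L_between_half_Ltilde_and_Ltilde {V : Type*} [Fintype V] [DecidableEq V]
    (E : Finset (V × V)) (w : V × V → ℝ) (hw : ∀ e ∈ E, 0 ≤ w e)
    (hloop : ∀ e ∈ E, e.1 ≠ e.2) (hori : ∀ e ∈ E, (e.2, e.1) ∉ E)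
    (π : Finset V → ℝ) (hpos : ∀ S : Finset V, 0 ≤ π S)
    (hsum : ∑ S : Finset V, π S = 1)
    (q : V → ℝ) (hq : ∀ v : V, q v = marg π v)
    (x : V → ℝ) (hx : ∀ v : V, 0 ≤ x v ∧ x v ≤ 1) :
    (1 / 2) * Ltilde E w q x ≤ Lfun E w π x ∧ Lfun E w π x ≤ Ltilde E w q x := by
  
  constructor
  · rw [Ltilde, Lfun, Finset.mul_sum]
    apply Finset.sum_le_sum
    intro e he
    obtain ⟨ha0, ha1⟩ := hx e.1
    obtain ⟨hb0, hb1⟩ := hx e.2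
    have hw' := hw e he
    have hm0 : (0:ℝ) ≤ max 0 (x e.1 + x e.2 - 1) := le_max_left _ _
    have hma : max 0 (x e.1 + x e.2 - 1) ≤ x e.1 := max_le ha0 (by linarith)
    have hmb : max 0 (x e.1 + x e.2 - 1) ≤ x e.2 := max_le hb0 (by linarith)
    have h12 := marg2_nonneg π hpos e.1 e.2
    have hl := marg2_le_marg_left π hpos e.1 e.2
    have hr := marg2_le_marg_right π hpos e.1 e.2
    have hu := marg_union_bound π hpos hsum e.1 e.2
    have hc0 : 0 ≤ 1 - marg π e.1 - marg π e.2 + marg2 π e.1 e.2 := by linarith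
    have h1 : max 0 (x e.1 + x e.2 - 1) * (1 - marg π e.1 - marg π e.2 + marg2 π e.1 e.2)
        ≤ x e.1 * (1 - marg π e.1) := by nlinarith
    have h2 : max 0 (x e.1 + x e.2 - 1) * (1 - marg π e.1 - marg π e.2 + marg2 π e.1 e.2)
        ≤ x e.2 * (1 - marg π e.2) := by nlinarith
    have h1' := mul_le_mul_of_nonneg_left h1 hw'
    have h2' := mul_le_mul_of_nonneg_left h2 hw'
    rw [hq e.1, hq e.2]
    nlinarith
  · rw [Ltilde, Lfun]
    apply Finset.sum_le_sum
    intro e he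
    obtain ⟨ha0, ha1⟩ := hx e.1
    obtain ⟨hb0, hb1⟩ := hx e.2
    have hw' := hw e he
    have hm0 : (0:ℝ) ≤ max 0 (x e.1 + x e.2 - 1) := le_max_left _ _
    have hu := marg_union_bound π hpos hsum e.1 e.2
    have h12 := marg2_nonneg π hpos e.1 e.2
    have hc0 : 0 ≤ 1 - marg π e.1 - marg π e.2 + marg2 π e.1 e.2 := by linarith
    have key := mul_nonneg (mul_nonneg hm0 hw') hc0
    rw [hq e.1, hq e.2]
    nlinarith
end
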